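/- Let U ⊆ ℝᵐ be a compact set and g : ℝⁿ × ℝᵐ → ℝⁿ a continuous map. For sets T ⊆ Ω ⊆ ℝⁿ, define the controllable domain C(T, Ω) = {x₀ ∈ Ω : ∃ T' ≥ 0, ∃ measurable u : ℝ → U, ∃ continuous X : [0,T'] → ℝⁿ with X(t) = x₀ + ∫₀ᵗ g(X(s), u(s)) ds and X(t) ∈ Ω for all t ∈ [0,T'], and X(T') ∈ T}. Let D₀, …, D_r ⊆ ℝⁿ be closed sets with D_i ∩ D_{i+1} ≠ ∅ for i = 0,…,r−1, let Ω = D₀ ∪ ⋯ ∪ D_r, let T_f ⊆ D₀, and define recursively τ₀ = T_f and τ_{i+1} = C(τ_i, D_i) ∩ ∂D_i ∩ ∂D_{i+1} for i = 0,…,r−1. Then C(τ₀, D₀) ∪ C(τ₁, D₁) ∪ ⋯ ∪ C(τ_r, D_r) ⊆ C(T_f, Ω). -/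

import Mathlib

open MeasureTheory

/-- The controllable domain `C(Tgt, Ω)` to the target `Tgt` while remaining within `Ω`,
for the controlled dynamic `g` with controls taking values in `U`: the set of points
`x₀ ∈ Ω` from which some trajectory `X(t) = x₀ + ∫₀ᵗ g(X(s), u(s)) ds`, driven by a
measurable control `u` with values in `U`, stays in `Ω` on `[0, T']` and reaches `Tgt`
at some finite time `T' ≥ 0`. -/
def ctrlDomain (n m : ℕ) (U : Set (EuclideanSpace ℝ (Fin m)))
    (g : EuclideanSpace ℝ (Fin n) → EuclideanSpace ℝ (Fin m) → EuclideanSpace ℝ (Fin n))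
    (Tgt Ω : Set (EuclideanSpace ℝ (Fin n))) : Set (EuclideanSpace ℝ (Fin n)) :=
  {x₀ | x₀ ∈ Ω ∧ ∃ T' : ℝ, 0 ≤ T' ∧ ∃ u : ℝ → EuclideanSpace ℝ (Fin m),
    Measurable u ∧ (∀ s, u s ∈ U) ∧
    ∃ X : ℝ → EuclideanSpace ℝ (Fin n), ContinuousOn X (Set.Icc 0 T') ∧
      (∀ t ∈ Set.Icc (0 : ℝ) T', X t = x₀ + ∫ s in (0 : ℝ)..t, g (X s) (u s)) ∧
      (∀ t ∈ Set.Icc (0 : ℝ) T', X t ∈ Ω) ∧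
      X T' ∈ Tgt}

/-- Pasting lemma for `ContinuousOn` on a union of two closed sets. -/
lemma continuousOn_union_of_isClosed {α β : Type*} [TopologicalSpace α] [TopologicalSpace β]
    {f : α → β} {s t : Set α} (hsc : IsClosed s) (htc : IsClosed t)
    (hs : ContinuousOn f s) (ht : ContinuousOn f t) : ContinuousOn f (s ∪ t) := by
  intro x hx
  have h1 : ContinuousWithinAt f s x := by
    by_cases h : x ∈ s
    · exact hs x h
    · exact continuousWithinAt_of_notMem_closure (by rwa [hsc.closure_eq])
  have h2 : ContinuousWithinAt f t x := by
    by_cases h : x ∈ t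
    · exact ht x h
    · exact continuousWithinAt_of_notMem_closure (by rwa [htc.closure_eq])
  exact h1.union h2

lemma ctrlDomain_mono {n m : ℕ} {U : Set (EuclideanSpace ℝ (Fin m))}
    {g : EuclideanSpace ℝ (Fin n) → EuclideanSpace ℝ (Fin m) → EuclideanSpace ℝ (Fin n)}
    {T1 T2 Ω1 Ω2 : Set (EuclideanSpace ℝ (Fin n))} (hT : T1 ⊆ T2) (hΩ : Ω1 ⊆ Ω2) :
    ctrlDomain n m U g T1 Ω1 ⊆ ctrlDomain n m U g T2 Ω2 := by
  rintro x ⟨hx, T', hT', u, hu, huU, X, hXc, hXeq, hXΩ, hXT⟩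
  exact ⟨hΩ hx, T', hT', u, hu, huU, X, hXc, hXeq, fun t ht => hΩ (hXΩ t ht), hT hXT⟩

lemma ctrlDomain_trans {n m : ℕ} {U : Set (EuclideanSpace ℝ (Fin m))}
    (hU : IsCompact U)
    {g : EuclideanSpace ℝ (Fin n) → EuclideanSpace ℝ (Fin m) → EuclideanSpace ℝ (Fin n)}
    (hgc : Continuous fun p : EuclideanSpace ℝ (Fin n) × EuclideanSpace ℝ (Fin m) =>
      g p.1 p.2)
    {Tf Ω : Set (EuclideanSpace ℝ (Fin n))} :
    ctrlDomain n m U g (ctrlDomain n m U g Tf Ω) Ω ⊆ ctrlDomain n m U g Tf Ω := by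
  rintro x₀ ⟨hx₀, T₁, hT₁, u₁, hu₁, hu₁U, X₁, hX₁c, hX₁eq, hX₁Ω, hX₁T⟩
  obtain ⟨hy, T₂, hT₂, u₂, hu₂, hu₂U, X₂, hX₂c, hX₂eq, hX₂Ω, hX₂T⟩ := hX₁T
  have hX₂0 : X₂ 0 = X₁ T₁ := by
    have := hX₂eq 0 ⟨le_refl _, hT₂⟩
    simpa using this
  set T : ℝ := T₁ + T₂ with hT_def
  have hT₁T : T₁ ≤ T := le_add_of_nonneg_right hT₂
  have hT0 : (0:ℝ) ≤ T := le_trans hT₁ hT₁T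
  set u : ℝ → EuclideanSpace ℝ (Fin m) := fun s => if s < T₁ then u₁ s else u₂ (s - T₁)
    with hu_def
  set X : ℝ → EuclideanSpace ℝ (Fin n) := fun t => if t ≤ T₁ then X₁ t else X₂ (t - T₁)
    with hX_def
  have hXeqX₁ : ∀ t, t ≤ T₁ → X t = X₁ t := fun t ht => if_pos ht
  have hXeqX₂ : ∀ t, T₁ ≤ t → X t = X₂ (t - T₁) := by
    intro t ht
    rcases eq_or_lt_of_le ht with h | h
    · simp only [hX_def, ← h, le_refl, if_pos, sub_self, hX₂0]
    · exact if_neg (not_le.mpr h)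
  have huU : ∀ s, u s ∈ U := by
    intro s
    simp only [hu_def]
    split
    · exact hu₁U s
    · exact hu₂U _
  have huMeas : Measurable u :=
    Measurable.ite measurableSet_Iio hu₁ (hu₂.comp (measurable_id.sub measurable_const))
  have hueq₁ : ∀ s, s < T₁ → u s = u₁ s := fun s hs => if_pos hs
  have hueq₂ : ∀ s, T₁ ≤ s → u s = u₂ (s - T₁) := fun s hs => if_neg (not_lt.mpr hs)
  -- continuity of X on [0, T]
  have hXc : ContinuousOn X (Set.Icc 0 T) := by
    have h1 : ContinuousOn X (Set.Icc 0 T₁) :=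
      hX₁c.congr (fun t ht => hXeqX₁ t ht.2)
    have h2 : ContinuousOn X (Set.Icc T₁ T) := by
      have hcomp : ContinuousOn (fun t => X₂ (t - T₁)) (Set.Icc T₁ T) := by
        apply hX₂c.comp (continuous_id.sub continuous_const).continuousOn
        intro t ht
        exact ⟨sub_nonneg.mpr ht.1, by
          have := sub_le_sub_right ht.2 T₁; simpa [hT_def] using this⟩
      exact hcomp.congr (fun t ht => hXeqX₂ t ht.1)
    have hunion : Set.Icc (0:ℝ) T = Set.Icc 0 T₁ ∪ Set.Icc T₁ T :=
      (Set.Icc_union_Icc_eq_Icc hT₁ hT₁T).symm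
    rw [hunion]
    exact continuousOn_union_of_isClosed isClosed_Icc isClosed_Icc h1 h2
  -- integrability of the vector field along X
  have hfInt : IntegrableOn (fun s => g (X s) (u s)) (Set.Icc 0 T) := by
    have hXmeas : AEStronglyMeasurable X (volume.restrict (Set.Icc 0 T)) :=
      hXc.aestronglyMeasurable measurableSet_Icc
    have hpair : AEStronglyMeasurable (fun s => (X s, u s))
        (volume.restrict (Set.Icc 0 T)) :=
      hXmeas.prodMk huMeas.aestronglyMeasurable
    have hcomp : AEStronglyMeasurable (fun s => g (X s) (u s))
        (volume.restrict (Set.Icc 0 T)) := hgc.comp_aestronglyMeasurable hpair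
    have hK : IsCompact (X '' Set.Icc 0 T) := isCompact_Icc.image_of_continuousOn hXc
    have hKU : IsCompact ((fun p : _ × _ => g p.1 p.2) '' ((X '' Set.Icc 0 T) ×ˢ U)) :=
      (hK.prod hU).image hgc
    obtain ⟨C, hC⟩ := hKU.isBounded.exists_norm_le
    refine Integrable.mono' (g := fun _ => C) ((integrableOn_const_iff (C := C)).mpr (Or.inr ?_)) hcomp ?_
    · simp [Real.volume_Icc]
    · filter_upwards [ae_restrict_mem measurableSet_Icc] with s hs
      exact hC _ ⟨(X s, u s), ⟨⟨s, hs, rfl⟩, huU s⟩, rfl⟩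
  have hIntAB : ∀ a b : ℝ, a ∈ Set.Icc (0:ℝ) T → b ∈ Set.Icc (0:ℝ) T →
      IntervalIntegrable (fun s => g (X s) (u s)) volume a b := by
    intro a b ha hb
    exact (hfInt.mono_set (Set.uIcc_subset_Icc ha hb)).intervalIntegrable
  -- a.e. removal of the junction point
  have hne : ∀ᵐ s : ℝ, s ≠ T₁ := by
    rw [MeasureTheory.ae_iff]
    convert Real.volume_singleton (a := T₁) using 2
    ext s; simp
  -- the integral equation on the first segment
  have heq₁ : ∀ t, t ∈ Set.Icc (0:ℝ) T₁ →
      (∫ s in (0:ℝ)..t, g (X s) (u s)) = ∫ s in (0:ℝ)..t, g (X₁ s) (u₁ s) := by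
    intro t ht
    apply intervalIntegral.integral_congr_ae
    filter_upwards [hne] with s hs hsmem
    have hs' : s ∈ Set.Ioc (0:ℝ) t := by
      rwa [Set.uIoc_of_le ht.1] at hsmem
    have hsle : s < T₁ := lt_of_le_of_ne (hs'.2.trans ht.2) hs
    rw [hXeqX₁ s hsle.le, hueq₁ s hsle]
  -- the integral equation on the second segment
  have heq₂ : ∀ t, t ∈ Set.Icc T₁ T →
      (∫ s in T₁..t, g (X s) (u s)) = ∫ s in (0:ℝ)..(t - T₁), g (X₂ s) (u₂ s) := by
    intro t ht
    have h1 : (∫ s in T₁..t, g (X s) (u s))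
        = ∫ s in T₁..t, g (X₂ (s - T₁)) (u₂ (s - T₁)) := by
      apply intervalIntegral.integral_congr_ae
      filter_upwards [hne] with s hs hsmem
      have hs' : s ∈ Set.Ioc T₁ t := by rwa [Set.uIoc_of_le ht.1] at hsmem
      rw [hXeqX₂ s hs'.1.le, hueq₂ s hs'.1.le]
    rw [h1]
    have := intervalIntegral.integral_comp_sub_right
      (a := T₁) (b := t) (fun s => g (X₂ s) (u₂ s)) T₁
    simpa using this
  refine ⟨hx₀, T, hT0, u, huMeas, huU, X, hXc, ?_, ?_, ?_⟩
  · -- integral equation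
    intro t ht
    by_cases hcase : t ≤ T₁
    · rw [hXeqX₁ t hcase, hX₁eq t ⟨ht.1, hcase⟩, heq₁ t ⟨ht.1, hcase⟩]
    · have htT₁ : T₁ ≤ t := le_of_not_ge hcase
      have ht₂ : t - T₁ ∈ Set.Icc (0:ℝ) T₂ :=
        ⟨sub_nonneg.mpr htT₁, by
          have := sub_le_sub_right ht.2 T₁; simpa [hT_def] using this⟩
      have hsplit : (∫ s in (0:ℝ)..t, g (X s) (u s))
          = (∫ s in (0:ℝ)..T₁, g (X s) (u s)) + ∫ s in T₁..t, g (X s) (u s) :=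
        (intervalIntegral.integral_add_adjacent_intervals
          (hIntAB 0 T₁ ⟨le_refl _, hT0⟩ ⟨hT₁, hT₁T⟩)
          (hIntAB T₁ t ⟨hT₁, hT₁T⟩ ht)).symm
      rw [hXeqX₂ t htT₁, hX₂eq (t - T₁) ht₂,
        hX₁eq T₁ ⟨hT₁, le_refl _⟩, hsplit,
        heq₁ T₁ ⟨hT₁, le_refl _⟩, heq₂ t ⟨htT₁, ht.2⟩]
      abel
  · -- stays in Ω
    intro t ht
    by_cases hcase : t ≤ T₁
    · rw [hXeqX₁ t hcase]; exact hX₁Ω t ⟨ht.1, hcase⟩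
    · have htT₁ : T₁ ≤ t := le_of_not_ge hcase
      rw [hXeqX₂ t htT₁]
      exact hX₂Ω (t - T₁) ⟨sub_nonneg.mpr htT₁, by
        have := sub_le_sub_right ht.2 T₁; simpa [hT_def] using this⟩
  · -- reaches the target
    rw [hXeqX₂ T hT₁T]
    simpa [hT_def] using hX₂T

/-- Propagation of local controllable domains along a path of adjacent cells: the union of
the local controllable domains `C(τᵢ, Dᵢ)`, with targets recursively defined by
`τ₀ = T_f` and `τ_{i+1} = C(τᵢ, Dᵢ) ∩ ∂Dᵢ ∩ ∂D_{i+1}`, is contained in the controllable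
domain `C(T_f, Ω)` inside `Ω = D₀ ∪ ⋯ ∪ D_r`. -/
theorem local_ctrlDomains_subset_global {n m : ℕ} (U : Set (EuclideanSpace ℝ (Fin m)))
    (hU : IsCompact U)
    (g : EuclideanSpace ℝ (Fin n) → EuclideanSpace ℝ (Fin m) → EuclideanSpace ℝ (Fin n))
    (hgc : Continuous fun p : EuclideanSpace ℝ (Fin n) × EuclideanSpace ℝ (Fin m) =>
      g p.1 p.2)
    (r : ℕ) (D : ℕ → Set (EuclideanSpace ℝ (Fin n)))
    (hDclosed : ∀ i ≤ r, IsClosed (D i))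
    (hadj : ∀ i < r, (D i ∩ D (i + 1)).Nonempty)
    (Ω : Set (EuclideanSpace ℝ (Fin n))) (hΩ : Ω = ⋃ i ∈ Set.Iic r, D i)
    (Tf : Set (EuclideanSpace ℝ (Fin n))) (hTf : Tf ⊆ D 0)
    (τ : ℕ → Set (EuclideanSpace ℝ (Fin n)))
    (hτ0 : τ 0 = Tf)
    (hτ : ∀ i < r, τ (i + 1) =
      ctrlDomain n m U g (τ i) (D i) ∩ frontier (D i) ∩ frontier (D (i + 1))) :
    (⋃ i ∈ Set.Iic r, ctrlDomain n m U g (τ i) (D i)) ⊆ ctrlDomain n m U g Tf Ω := by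
  have hDsub : ∀ i ≤ r, D i ⊆ Ω := by
    intro i hi
    rw [hΩ]
    exact Set.subset_biUnion_of_mem hi
  have key : ∀ i ≤ r, ctrlDomain n m U g (τ i) (D i) ⊆ ctrlDomain n m U g Tf Ω := by
    intro i
    induction i with
    | zero =>
      intro hi
      rw [hτ0]
      exact ctrlDomain_mono subset_rfl (hDsub 0 hi)
    | succ k ih =>
      intro hk
      have hkr : k < r := hk
      have hτk : τ (k + 1) ⊆ ctrlDomain n m U g Tf Ω := by
        rw [hτ k hkr]
        exact fun x hx => ih hkr.le hx.1.1
      calc ctrlDomain n m U g (τ (k + 1)) (D (k + 1))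
          ⊆ ctrlDomain n m U g (ctrlDomain n m U g Tf Ω) Ω :=
            ctrlDomain_mono hτk (hDsub (k + 1) hk)
        _ ⊆ ctrlDomain n m U g Tf Ω := ctrlDomain_trans hU hgc
  intro x hx
  obtain ⟨i, hi, hxi⟩ := Set.mem_iUnion₂.mp hx
  exact key i hi hxi
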